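/- Let A be a 2n×2n real symmetric matrix, φ(y) = yᵗAy, and μ_A(E) = ∫_{ℝ^{2n}} χ_E(y, φ(y)) dy. Let 1 ≤ p, q < ∞. If there is a constant c > 0 with ‖f ∗ μ_A‖_{L^q(ℍⁿ)} ≤ c ‖f‖_{L^p(ℍⁿ)} for all f ∈ L^p(ℍⁿ), then 1/q = 1/p − 2n/(2n+2). -/

import Mathlib

open MeasureTheory Matrix Real ENNReal

noncomputable section

abbrev Hidx (n : ℕ) := Fin n ⊕ Fin n
abbrev Hgrp (n : ℕ) := (Hidx n → ℝ) × ℝ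

/-- The `2n × 2n` skew-symmetric matrix `J = [[0, Iₙ], [-Iₙ, 0]]`. -/
def Jmat (n : ℕ) : Matrix (Hidx n) (Hidx n) ℝ := Matrix.fromBlocks 0 1 (-1) 0

/-- Heisenberg multiplication `(x,t)·(y,s) = (x+y, t+s+xᵗJy)`. -/
def heisMul {n : ℕ} (p q : Hgrp n) : Hgrp n :=
  (p.1 + q.1, p.2 + q.2 + p.1 ⬝ᵥ (Jmat n *ᵥ q.1))

/-- Heisenberg inversion `(x,t)⁻¹ = (−x,−t)`. -/
def heisInv {n : ℕ} (p : Hgrp n) : Hgrp n := (-p.1, -p.2)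

/-- The quadratic form `φ(y) = yᵗAy`. -/
def qform {n : ℕ} (A : Matrix (Hidx n) (Hidx n) ℝ) (y : Hidx n → ℝ) : ℝ := y ⬝ᵥ (A *ᵥ y)

/-- The Euclidean norm on `ℝ^{2n}`. -/
def enorm2n {n : ℕ} (y : Hidx n → ℝ) : ℝ := Real.sqrt (∑ i, y i ^ 2)

/-- Convolution on the right by a Borel measure on the Heisenberg group:
`(f ∗ μ)(x,t) = ∫ f((x,t)·(y,s)⁻¹) dμ(y,s)`. -/
def heisConv {n : ℕ} (f : Hgrp n → ℝ) (μ : Measure (Hgrp n)) (p : Hgrp n) : ℝ :=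
  ∫ q, f (heisMul p (heisInv q)) ∂μ

/-- The measure `ν_γ(E) = ∫_{ℝ^{2n}} χ_E(y, φ(y)) η(y) |y|^{−γ} dy` on `ℍⁿ`. -/
def nuGamma {n : ℕ} (A : Matrix (Hidx n) (Hidx n) ℝ) (η : (Hidx n → ℝ) → ℝ) (γ : ℝ) :
    Measure (Hgrp n) :=
  Measure.map (fun y => (y, qform A y))
    (volume.withDensity (fun y => ENNReal.ofReal (η y * enorm2n y ^ (-γ))))

/-- The measure `μ_A(E) = ∫_{ℝ^{2n}} χ_E(y, φ(y)) dy` on `ℍⁿ`. -/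
def muA {n : ℕ} (A : Matrix (Hidx n) (Hidx n) ℝ) : Measure (Hgrp n) :=
  Measure.map (fun y => (y, qform A y)) volume

namespace MuAScale

variable {n : ℕ}

/-- Heisenberg dilation. -/
def dil (n : ℕ) (l : ℝ) (p : Hgrp n) : Hgrp n := (l • p.1, l ^ 2 * p.2)

lemma measurable_dotMulVec (M : Matrix (Hidx n) (Hidx n) ℝ) :
    Measurable (fun z : (Hidx n → ℝ) × (Hidx n → ℝ) => z.1 ⬝ᵥ (M *ᵥ z.2)) := by
  have h : (fun z : (Hidx n → ℝ) × (Hidx n → ℝ) => z.1 ⬝ᵥ (M *ᵥ z.2)) =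
      fun z => ∑ i, z.1 i * ∑ j, M i j * z.2 j := by
    funext z; simp [dotProduct, Matrix.mulVec]
  rw [h]
  exact Finset.measurable_sum _ fun i _ =>
    ((measurable_pi_apply i).comp measurable_fst).mul
      (Finset.measurable_sum _ fun j _ =>
        measurable_const.mul ((measurable_pi_apply j).comp measurable_snd))

lemma measurable_qform (A : Matrix (Hidx n) (Hidx n) ℝ) : Measurable (qform A) :=
  (measurable_dotMulVec A).comp (measurable_id.prodMk measurable_id)

/-- The full map `(p, y) ↦ p · (y, φ(y))⁻¹`. -/
def Phi (A : Matrix (Hidx n) (Hidx n) ℝ) (p : Hgrp n) (y : Hidx n → ℝ) : Hgrp n :=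
  heisMul p (heisInv (y, qform A y))

lemma measurable_Phi (A : Matrix (Hidx n) (Hidx n) ℝ) :
    Measurable (fun z : Hgrp n × (Hidx n → ℝ) => Phi A z.1 z.2) := by
  unfold Phi heisMul heisInv
  refine Measurable.prodMk ?_ ?_
  · exact (measurable_fst.fst).add measurable_snd.neg
  · refine ((measurable_fst.snd).add ((measurable_qform A).comp measurable_snd).neg).add ?_
    exact (measurable_dotMulVec (Jmat n)).comp
      (measurable_fst.fst.prodMk measurable_snd.neg)

lemma measurable_Phi_left (A : Matrix (Hidx n) (Hidx n) ℝ) (p : Hgrp n) :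
    Measurable (Phi A p) :=
  (measurable_Phi A).comp (measurable_const.prodMk measurable_id)

lemma measurable_dil (l : ℝ) : Measurable (dil n l) :=
  (measurable_fst.const_smul l).prodMk (measurable_snd.const_mul (l ^ 2))

end MuAScale
namespace MuAScale2
open MuAScale

variable {n : ℕ} (A : Matrix (Hidx n) (Hidx n) ℝ)

lemma qform_smul (l : ℝ) (y : Hidx n → ℝ) : qform A (l • y) = l ^ 2 * qform A y := by
  simp [qform, Matrix.mulVec_smul, smul_dotProduct, dotProduct_smul,
    smul_eq_mul]
  ring

lemma dil_Phi (l : ℝ) (p : Hgrp n) (y : Hidx n → ℝ) :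
    Phi A (dil n l p) (l • y) = dil n l (Phi A p y) := by
  unfold Phi dil heisMul heisInv
  refine Prod.ext ?_ ?_
  · simp [smul_add, smul_neg]
  · simp [qform_smul, Matrix.mulVec_smul, smul_dotProduct, dotProduct_smul,
      smul_eq_mul, Matrix.mulVec_neg, dotProduct_neg]
    ring

end MuAScale2
namespace MuAScale3
open MuAScale

variable {n : ℕ}

lemma smul_prod_meas {α β : Type*} [MeasurableSpace α] [MeasurableSpace β]
    (c : ℝ≥0∞) (μ : Measure α) (ν : Measure β) [SFinite μ] [SFinite ν] :
    (c • μ).prod ν = c • μ.prod ν := by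
  ext s hs
  rw [Measure.smul_apply, Measure.prod_apply hs, Measure.prod_apply hs,
    lintegral_smul_measure]

lemma prod_smul_meas {α β : Type*} [MeasurableSpace α] [MeasurableSpace β]
    (c : ℝ≥0∞) (μ : Measure α) (ν : Measure β) [SFinite μ] [SFinite ν] :
    μ.prod (c • ν) = c • μ.prod ν := by
  ext s hs
  rw [Measure.smul_apply, Measure.prod_apply hs, Measure.prod_apply hs, smul_eq_mul,
    ← lintegral_const_mul _ (measurable_measure_prodMk_left hs)]
  simp

lemma finrank_H : Module.finrank ℝ (Hidx n → ℝ) = 2 * n := by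
  rw [Module.finrank_fintype_fun_eq_card]
  simp [Fintype.card_sum]
  omega

lemma map_smul_vol {l : ℝ} (hl : 0 < l) :
    Measure.map (fun x : Hidx n → ℝ => l • x) volume
      = ENNReal.ofReal ((l ^ (2 * n))⁻¹) • volume := by
  rw [show (fun x : Hidx n → ℝ => l • x) = (l • ·) from rfl,
    MeasureTheory.Measure.map_addHaar_smul volume hl.ne']
  congr 1
  rw [finrank_H, abs_of_pos (by positivity)]

lemma map_dil_vol {l : ℝ} (hl : 0 < l) :
    Measure.map (dil n l) (volume : Measure (Hgrp n))
      = ENNReal.ofReal ((l ^ (2 * n + 2))⁻¹) • volume := by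
  have h2 : Measure.map (fun t : ℝ => l ^ 2 * t) volume
      = ENNReal.ofReal ((l ^ 2)⁻¹) • volume := by
    rw [show (fun t : ℝ => l ^ 2 * t) = ((l ^ 2) * ·) from rfl,
      Real.map_volume_mul_left (by positivity : (l:ℝ) ^ 2 ≠ 0),
      abs_of_pos (by positivity)]
  have hprodmap : (volume : Measure (Hgrp n)) = volume.prod volume := Measure.volume_eq_prod _ _
  calc Measure.map (dil n l) (volume : Measure (Hgrp n))
      = Measure.map (Prod.map (fun x : Hidx n → ℝ => l • x) (fun t : ℝ => l ^ 2 * t))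
          ((volume : Measure (Hidx n → ℝ)).prod (volume : Measure ℝ)) := by
        rw [← hprodmap]; rfl
    _ = ((Measure.map (fun x : Hidx n → ℝ => l • x) volume).prod
          (Measure.map (fun t : ℝ => l ^ 2 * t) volume)) :=
        (Measure.map_prod_map _ _ (measurable_id.const_smul l)
          (measurable_id.const_mul (l ^ 2))).symm
    _ = (ENNReal.ofReal ((l ^ (2 * n))⁻¹) • (volume : Measure (Hidx n → ℝ))).prod
          (ENNReal.ofReal ((l ^ 2)⁻¹) • (volume : Measure ℝ)) := by
        rw [map_smul_vol hl, h2]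
    _ = (ENNReal.ofReal ((l ^ (2 * n))⁻¹) * ENNReal.ofReal ((l ^ 2)⁻¹)) •
          ((volume : Measure (Hidx n → ℝ)).prod (volume : Measure ℝ)) := by
        rw [smul_prod_meas, prod_smul_meas, smul_smul]
    _ = ENNReal.ofReal ((l ^ (2 * n + 2))⁻¹) • (volume : Measure (Hgrp n)) := by
        rw [← hprodmap, ← ENNReal.ofReal_mul (by positivity)]
        congr 2
        rw [← mul_inv, ← pow_add]

end MuAScale3
namespace MuAScale4
open MuAScale MuAScale2 MuAScale3

variable {n : ℕ} (A : Matrix (Hidx n) (Hidx n) ℝ)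

lemma indicator_comp {α β : Type*} (S : Set β) (φ : α → β) :
    (fun a => S.indicator (fun _ => (1:ℝ)) (φ a)) = (φ ⁻¹' S).indicator (fun _ => (1:ℝ)) := by
  funext a
  by_cases h : φ a ∈ S <;> simp [Set.indicator_apply, h]

/-- Convolution of an indicator with `μ_A` is the volume of a slice. -/
lemma conv_indicator {S : Set (Hgrp n)} (hS : MeasurableSet S) (p : Hgrp n) :
    heisConv (S.indicator fun _ => (1:ℝ)) (muA A) p
      = (volume (Phi A p ⁻¹' S)).toReal := by
  unfold heisConv muA
  have hT : Measurable (fun y : Hidx n → ℝ => (y, qform A y)) :=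
    measurable_id.prodMk (measurable_qform A)
  have hΨ : Measurable (fun q : Hgrp n => heisMul p (heisInv q)) := by
    unfold heisMul heisInv
    refine Measurable.prodMk (measurable_const.add measurable_fst.neg) ?_
    refine (measurable_const.add measurable_snd.neg).add ?_
    exact (measurable_dotMulVec (Jmat n)).comp (measurable_const.prodMk measurable_fst.neg)
  have hfun : (fun q : Hgrp n => S.indicator (fun _ => (1:ℝ)) (heisMul p (heisInv q)))
      = ((fun q : Hgrp n => heisMul p (heisInv q)) ⁻¹' S).indicator (fun _ => (1:ℝ)) :=
    indicator_comp S _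
  rw [MeasureTheory.integral_map hT.aemeasurable]
  · have hfun2 : (fun y : Hidx n → ℝ =>
        S.indicator (fun _ => (1:ℝ)) (heisMul p (heisInv (y, qform A y))))
        = (Phi A p ⁻¹' S).indicator (fun _ => (1:ℝ)) := indicator_comp S (Phi A p)
    calc ∫ y, S.indicator (fun _ => (1:ℝ)) (heisMul p (heisInv (y, qform A y)))
        = ∫ y, (Phi A p ⁻¹' S).indicator (fun _ => (1:ℝ)) y := by rw [hfun2]
      _ = (volume (Phi A p ⁻¹' S)).toReal • (1:ℝ) :=
          integral_indicator_const (1:ℝ) ((measurable_Phi_left A p) hS)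
      _ = (volume (Phi A p ⁻¹' S)).toReal := by rw [smul_eq_mul, mul_one]
  · rw [hfun]
    exact (stronglyMeasurable_const.indicator (hΨ hS)).aestronglyMeasurable

lemma measurable_conv_indicator {S : Set (Hgrp n)} (hS : MeasurableSet S) :
    Measurable (heisConv (S.indicator fun _ => (1:ℝ)) (muA A)) := by
  have h : heisConv (S.indicator fun _ => (1:ℝ)) (muA A)
      = fun p => (volume (Prod.mk p ⁻¹' ((fun z : Hgrp n × (Hidx n → ℝ) => Phi A z.1 z.2) ⁻¹' S))).toReal := by
    funext p
    rw [conv_indicator A hS p]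
    rfl
  rw [h]
  exact (measurable_measure_prodMk_left ((measurable_Phi A) hS)).ennreal_toReal

end MuAScale4
namespace MuAScale5
open MuAScale MuAScale2 MuAScale3 MuAScale4

variable {n : ℕ} (A : Matrix (Hidx n) (Hidx n) ℝ)

lemma conv_scale {S : Set (Hgrp n)} (hS : MeasurableSet S) {l : ℝ} (hl : 0 < l) :
    heisConv (fun q => S.indicator (fun _ => (1:ℝ)) (dil n l q)) (muA A)
      = fun p => ((l ^ (2 * n))⁻¹ : ℝ) *
          heisConv (S.indicator fun _ => (1:ℝ)) (muA A) (dil n l p) := by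
  funext p
  have hS' : MeasurableSet (dil n l ⁻¹' S) := (measurable_dil l) hS
  rw [indicator_comp S (dil n l), conv_indicator A hS', conv_indicator A hS]
  have hset : Phi A p ⁻¹' (dil n l ⁻¹' S)
      = (fun y : Hidx n → ℝ => l • y) ⁻¹' (Phi A (dil n l p) ⁻¹' S) := by
    ext y
    simp only [Set.mem_preimage]
    rw [← dil_Phi A l p y]
  have hsm : Measurable (fun y : Hidx n → ℝ => l • y) := measurable_const_smul l
  rw [hset, ← Measure.map_apply hsm
      ((measurable_Phi_left A (dil n l p)) hS), map_smul_vol hl,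
    Measure.smul_apply, smul_eq_mul, ENNReal.toReal_mul,
    ENNReal.toReal_ofReal (by positivity)]

end MuAScale5
namespace MuAScale6
open MuAScale MuAScale2 MuAScale3 MuAScale4 MuAScale5

variable {n : ℕ}

lemma eLpNorm_comp_dil {g : Hgrp n → ℝ} (hg : Measurable g) {l : ℝ} (hl : 0 < l)
    {r : ℝ≥0∞} (hr : r ≠ ∞) :
    eLpNorm (fun x => g (dil n l x)) r volume
      = ENNReal.ofReal ((l ^ (2 * n + 2))⁻¹) ^ (1 / r).toReal * eLpNorm g r volume := by
  have h1 : eLpNorm g r (Measure.map (dil n l) volume) = eLpNorm (g ∘ dil n l) r volume :=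
    eLpNorm_map_measure hg.stronglyMeasurable.aestronglyMeasurable
      (measurable_dil l).aemeasurable
  have h2 : eLpNorm (fun x => g (dil n l x)) r volume = eLpNorm (g ∘ dil n l) r volume := rfl
  rw [h2, ← h1, map_dil_vol hl, eLpNorm_smul_measure_of_ne_top hr, smul_eq_mul]

lemma abs_dot_le (M : Matrix (Hidx n) (Hidx n) ℝ) {x y : Hidx n → ℝ}
    (hx : ‖x‖ ≤ 1) (hy : ‖y‖ ≤ 1) :
    |x ⬝ᵥ (M *ᵥ y)| ≤ ∑ i, ∑ j, |M i j| := by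
  have hxi : ∀ i, |x i| ≤ 1 := fun i => le_trans (by simpa using norm_le_pi_norm x i) hx
  have hyj : ∀ j, |y j| ≤ 1 := fun j => le_trans (by simpa using norm_le_pi_norm y j) hy
  have hrw : x ⬝ᵥ (M *ᵥ y) = ∑ i, x i * ∑ j, M i j * y j := by
    simp [dotProduct, Matrix.mulVec]
  rw [hrw]
  calc |∑ i, x i * ∑ j, M i j * y j| ≤ ∑ i, |x i * ∑ j, M i j * y j| :=
        Finset.abs_sum_le_sum_abs _ _
    _ ≤ ∑ i, ∑ j, |M i j| := by
        refine Finset.sum_le_sum fun i _ => ?_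
        rw [abs_mul]
        have h1 : |∑ j, M i j * y j| ≤ ∑ j, |M i j| := by
          refine (Finset.abs_sum_le_sum_abs _ _).trans (Finset.sum_le_sum fun j _ => ?_)
          rw [abs_mul]
          exact mul_le_of_le_one_right (abs_nonneg _) (hyj j)
        calc |x i| * |∑ j, M i j * y j| ≤ 1 * (∑ j, |M i j|) :=
              mul_le_mul (hxi i) h1 (abs_nonneg _) zero_le_one
          _ = ∑ j, |M i j| := one_mul _

end MuAScale6
namespace MuAScale7
open MuAScale MuAScale2 MuAScale3 MuAScale4 MuAScale5 MuAScale6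

variable {n : ℕ}

lemma eLpNorm_pos_of_lower {γ : Type*} [MeasurableSpace γ] {μ : Measure γ}
    {g : γ → ℝ} (hg : Measurable g) {U : Set γ} (hU : MeasurableSet U)
    (hU0 : μ U ≠ 0) {ε : ℝ} (hε : 0 < ε) (hlow : ∀ x ∈ U, ε ≤ g x)
    {q : ℝ} (hq : 1 ≤ q) : eLpNorm g (ENNReal.ofReal q) μ ≠ 0 := by
  have hq0 : 0 < q := lt_of_lt_of_le one_pos hq
  have hr0 : (ENNReal.ofReal q) ≠ 0 := by
    simp only [ne_eq, ENNReal.ofReal_eq_zero, not_le]; exact hq0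
  have hrT : (ENNReal.ofReal q) ≠ ∞ := ENNReal.ofReal_ne_top
  rw [eLpNorm_eq_lintegral_rpow_enorm_toReal hr0 hrT]
  have htR : (ENNReal.ofReal q).toReal = q := ENNReal.toReal_ofReal hq0.le
  rw [htR]
  have hL : (ENNReal.ofReal ε) ^ q * μ U ≤ ∫⁻ x, ‖g x‖ₑ ^ q ∂μ := by
    calc (ENNReal.ofReal ε) ^ q * μ U = ∫⁻ _ in U, (ENNReal.ofReal ε) ^ q ∂μ :=
          (setLIntegral_const U _).symm
      _ ≤ ∫⁻ x in U, ‖g x‖ₑ ^ q ∂μ := by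
          refine setLIntegral_mono (hg.enorm.pow_const _) ?_
          intro x hx
          refine ENNReal.rpow_le_rpow ?_ hq0.le
          exact le_trans (ENNReal.ofReal_le_ofReal (hlow x hx)) (Real.ofReal_le_enorm _)
      _ ≤ ∫⁻ x, ‖g x‖ₑ ^ q ∂μ := setLIntegral_le_lintegral _ _
  have hL0 : (ENNReal.ofReal ε) ^ q * μ U ≠ 0 :=
    mul_ne_zero (ENNReal.rpow_pos (ENNReal.ofReal_pos.2 hε) ENNReal.ofReal_ne_top).ne' hU0
  intro hcon
  rcases ENNReal.rpow_eq_zero_iff.1 hcon with ⟨h0, _⟩ | ⟨_, hneg⟩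
  · exact hL0 (le_antisymm (h0 ▸ hL) zero_le)
  · have : (0:ℝ) < 1 / q := by positivity
    linarith

end MuAScale7
namespace MuAScale8

lemma exponent_eq {a b c α β : ℝ} (ha : 0 < a) (hc : 0 < c) (hb : 0 < b)
    (h : ∀ l : ℝ, 0 < l → l ^ α * a ≤ c * (l ^ β * b)) : α = β := by
  by_contra hne
  have hd : α - β ≠ 0 := sub_ne_zero.2 hne
  have key : ∀ l : ℝ, 0 < l → l ^ (α - β) ≤ c * b / a := by
    intro l hl
    have h1 := h l hl
    have hβ : (0:ℝ) < l ^ β := Real.rpow_pos_of_pos hl β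
    have h2 : l ^ α = l ^ β * l ^ (α - β) := by
      rw [← Real.rpow_add hl]; ring_nf
    rw [h2] at h1
    have h1' : l ^ β * (l ^ (α - β) * a) ≤ l ^ β * (c * b) := by
      calc l ^ β * (l ^ (α - β) * a) = l ^ β * l ^ (α - β) * a := by ring
        _ ≤ c * (l ^ β * b) := h1
        _ = l ^ β * (c * b) := by ring
    exact (le_div_iff₀ ha).2 (le_of_mul_le_mul_left h1' hβ)
  have hX : (0:ℝ) < 2 * (c * b / a) := by positivity
  set X : ℝ := 2 * (c * b / a) with hXdef
  have hl : (0:ℝ) < X ^ (α - β)⁻¹ := Real.rpow_pos_of_pos hX _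
  have hpow : (X ^ (α - β)⁻¹) ^ (α - β) = X := by
    rw [← Real.rpow_mul hX.le, inv_mul_cancel₀ hd, Real.rpow_one]
  have hfin := key _ hl
  rw [hpow] at hfin
  have hK' : (0:ℝ) < c * b / a := by positivity
  rw [hXdef] at hfin
  linarith

end MuAScale8

open MuAScale MuAScale2 MuAScale3 MuAScale4 MuAScale5 MuAScale6 MuAScale7 MuAScale8


/-- Let `1 ≤ p, q < ∞`.  If `‖f ∗ μ_A‖_{L^q(ℍⁿ)} ≤ c ‖f‖_{L^p(ℍⁿ)}` for all
`f ∈ L^p(ℍⁿ)` and some constant `c > 0`, then `1/q = 1/p − 2n/(2n+2)`. -/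
theorem muA_bounded_necessary (n : ℕ) (A : Matrix (Hidx n) (Hidx n) ℝ) (hA : A.IsSymm)
    (p q : ℝ) (hp : 1 ≤ p) (hq : 1 ≤ q)
    (hbdd : ∃ c : ℝ, 0 < c ∧ ∀ f : Hgrp n → ℝ,
      MemLp f (ENNReal.ofReal p) volume →
        eLpNorm (heisConv f (muA A)) (ENNReal.ofReal q) volume ≤
          ENNReal.ofReal c * eLpNorm f (ENNReal.ofReal p) volume) :
    1 / q = 1 / p - 2 * n / (2 * n + 2) := by
  classical
  obtain ⟨c, hc, hB⟩ := hbdd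
  have hq0 : 0 < q := lt_of_lt_of_le one_pos hq
  have hp0 : 0 < p := lt_of_lt_of_le one_pos hp
  have hrT : (ENNReal.ofReal q) ≠ ∞ := ENNReal.ofReal_ne_top
  have hsT : (ENNReal.ofReal p) ≠ ∞ := ENNReal.ofReal_ne_top
  -- the test set
  set CA : ℝ := ∑ i, ∑ j, |A i j| with hCAdef
  set CJ : ℝ := ∑ i, ∑ j, |(Jmat n) i j| with hCJdef
  have hCA : 0 ≤ CA :=
    Finset.sum_nonneg fun i _ => Finset.sum_nonneg fun j _ => abs_nonneg _
  have hCJ : 0 ≤ CJ :=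
    Finset.sum_nonneg fun i _ => Finset.sum_nonneg fun j _ => abs_nonneg _
  set R : ℝ := 2 + CA + CJ with hRdef
  set S : Set (Hgrp n) := (Metric.ball (0 : Hidx n → ℝ) 2) ×ˢ (Metric.ball (0:ℝ) R)
    with hSdef
  have hSmeas : MeasurableSet S := measurableSet_ball.prod measurableSet_ball
  have hSfin : volume S ≠ ∞ := by
    rw [hSdef, Measure.volume_eq_prod, Measure.prod_prod]
    exact (ENNReal.mul_lt_top measure_ball_lt_top measure_ball_lt_top).ne
  set f₀ : Hgrp n → ℝ := S.indicator (fun _ => (1:ℝ)) with hf₀def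
  have hf₀meas : Measurable f₀ := measurable_const.indicator hSmeas
  have hf₀mem : MemLp f₀ (ENNReal.ofReal p) volume :=
    memLp_indicator_const _ hSmeas 1 (Or.inr hSfin)
  set g : Hgrp n → ℝ := heisConv f₀ (muA A) with hgdef
  have hgmeas : Measurable g := measurable_conv_indicator A hSmeas
  set G : ℝ≥0∞ := eLpNorm g (ENNReal.ofReal q) volume with hGdef
  set F : ℝ≥0∞ := eLpNorm f₀ (ENNReal.ofReal p) volume with hFdef
  have hFfin : F ≠ ∞ := hf₀mem.2.ne
  have hGleF : G ≤ ENNReal.ofReal c * F := hB f₀ hf₀mem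
  have hGfin : G ≠ ∞ :=
    (lt_of_le_of_lt hGleF (ENNReal.mul_lt_top ENNReal.ofReal_lt_top hFfin.lt_top)).ne
  -- positivity of G
  set U : Set (Hgrp n) := (Metric.ball (0 : Hidx n → ℝ) 1) ×ˢ (Metric.ball (0:ℝ) 1)
    with hUdef
  have hUmeas : MeasurableSet U := measurableSet_ball.prod measurableSet_ball
  have hU0 : volume U ≠ 0 := by
    rw [hUdef, Measure.volume_eq_prod, Measure.prod_prod]
    exact mul_ne_zero (Metric.measure_ball_pos volume _ one_pos).ne' (Metric.measure_ball_pos volume _ one_pos).ne'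
  set ε : ℝ := (volume (Metric.ball (0 : Hidx n → ℝ) 1)).toReal with hεdef
  have hε : 0 < ε :=
    ENNReal.toReal_pos (Metric.measure_ball_pos volume _ one_pos).ne' measure_ball_lt_top.ne
  have hlow : ∀ x ∈ U, ε ≤ g x := by
    intro x hx
    rw [hUdef, Set.mem_prod] at hx
    obtain ⟨hx1, hx2⟩ := hx
    have hx1' : ‖x.1‖ < 1 := mem_ball_zero_iff.1 hx1
    have hx2' : |x.2| < 1 := by
      simpa [Real.norm_eq_abs] using mem_ball_zero_iff.1 hx2
    rw [hgdef, hf₀def, conv_indicator A hSmeas]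
    have hsub : Metric.ball (0 : Hidx n → ℝ) 1 ⊆ Phi A x ⁻¹' S := by
      intro y hy
      have hy1 : ‖y‖ < 1 := mem_ball_zero_iff.1 hy
      rw [Set.mem_preimage, hSdef, Set.mem_prod]
      constructor
      · show (Phi A x y).1 ∈ Metric.ball (0 : Hidx n → ℝ) 2
        rw [mem_ball_zero_iff]
        show ‖x.1 + -y‖ < 2
        calc ‖x.1 + -y‖ ≤ ‖x.1‖ + ‖-y‖ := norm_add_le _ _
          _ = ‖x.1‖ + ‖y‖ := by rw [norm_neg]
          _ < 2 := by linarith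
      · show (Phi A x y).2 ∈ Metric.ball (0:ℝ) R
        rw [mem_ball_zero_iff, Real.norm_eq_abs]
        show |x.2 + -(qform A y) + x.1 ⬝ᵥ (Jmat n *ᵥ -y)| < R
        have hq1 : |qform A y| ≤ CA := abs_dot_le A hy1.le hy1.le
        have hq2 : |x.1 ⬝ᵥ (Jmat n *ᵥ -y)| ≤ CJ :=
          abs_dot_le (Jmat n) hx1'.le (by rw [norm_neg]; exact hy1.le)
        calc |x.2 + -(qform A y) + x.1 ⬝ᵥ (Jmat n *ᵥ -y)|
            ≤ |x.2 + -(qform A y)| + |x.1 ⬝ᵥ (Jmat n *ᵥ -y)| := abs_add_le _ _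
          _ ≤ |x.2| + |qform A y| + |x.1 ⬝ᵥ (Jmat n *ᵥ -y)| := by
              have := abs_add_le x.2 (-(qform A y))
              rw [abs_neg] at this
              linarith
          _ < R := by rw [hRdef]; linarith
    have hfin2 : volume (Phi A x ⁻¹' S) ≠ ∞ := by
      have hsub2 : Phi A x ⁻¹' S ⊆ Metric.ball x.1 2 := by
        intro y hy
        rw [Set.mem_preimage, hSdef, Set.mem_prod] at hy
        have h1 : ‖(Phi A x y).1‖ < 2 := mem_ball_zero_iff.1 hy.1
        have h1' : (Phi A x y).1 = x.1 + -y := rfl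
        rw [h1', ← sub_eq_add_neg] at h1
        rw [Metric.mem_ball, dist_eq_norm, norm_sub_rev]
        exact h1
      exact ne_top_of_le_ne_top measure_ball_lt_top.ne (measure_mono hsub2)
    rw [hεdef]
    exact ENNReal.toReal_mono hfin2 (measure_mono hsub)
  have hGpos : G ≠ 0 := by
    rw [hGdef]
    exact eLpNorm_pos_of_lower hgmeas hUmeas hU0 hε hlow hq
  -- real quantities
  set a : ℝ := G.toReal with hadef
  set b : ℝ := F.toReal with hbdef
  have ha : 0 < a := ENNReal.toReal_pos hGpos hGfin
  have hab : a ≤ c * b := by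
    have h := ENNReal.toReal_mono (ENNReal.mul_ne_top ENNReal.ofReal_ne_top hFfin) hGleF
    rwa [ENNReal.toReal_mul, ENNReal.toReal_ofReal hc.le] at h
  have hb : 0 < b := by nlinarith
  -- scaled inequality
  have hmain : ∀ l : ℝ, 0 < l →
      l ^ (-(2*(n:ℝ)) + (-(2*(n:ℝ)+2)) * q⁻¹) * a
        ≤ c * (l ^ ((-(2*(n:ℝ)+2)) * p⁻¹) * b) := by
    intro l hl
    have hS' : MeasurableSet (dil n l ⁻¹' S) := measurable_dil l hSmeas
    have hflvol : volume (dil n l ⁻¹' S) ≠ ∞ := by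
      rw [← Measure.map_apply (measurable_dil l) hSmeas, map_dil_vol hl,
        Measure.smul_apply, smul_eq_mul]
      exact ENNReal.mul_ne_top ENNReal.ofReal_ne_top hSfin
    have hflmem : MemLp (fun x => f₀ (dil n l x)) (ENNReal.ofReal p) volume := by
      rw [hf₀def, indicator_comp S (dil n l)]
      exact memLp_indicator_const _ hS' 1 (Or.inr hflvol)
    have happ := hB _ hflmem
    have hconv : heisConv (fun x => f₀ (dil n l x)) (muA A)
        = ((l ^ (2*n) : ℝ)⁻¹) • (fun x => g (dil n l x)) := by
      rw [hf₀def, conv_scale A hSmeas hl]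
      rfl
    rw [hconv, eLpNorm_const_smul, eLpNorm_comp_dil hgmeas hl hrT,
      eLpNorm_comp_dil hf₀meas hl hsT] at happ
    have hinvr : ((1 : ℝ≥0∞) / ENNReal.ofReal q).toReal = q⁻¹ := by
      rw [one_div, ENNReal.toReal_inv, ENNReal.toReal_ofReal hq0.le]
    have hinvs : ((1 : ℝ≥0∞) / ENNReal.ofReal p).toReal = p⁻¹ := by
      rw [one_div, ENNReal.toReal_inv, ENNReal.toReal_ofReal hp0.le]
    rw [hinvr, hinvs, ← hGdef, ← hFdef] at happ
    have hnn : ‖((l ^ (2*n) : ℝ))⁻¹‖ₑ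
        = ENNReal.ofReal ((l ^ (2*n) : ℝ))⁻¹ :=
      Real.enorm_eq_ofReal (by positivity)
    rw [hnn, ENNReal.ofReal_rpow_of_pos (by positivity),
      ENNReal.ofReal_rpow_of_pos (by positivity),
      ← ENNReal.ofReal_toReal hGfin, ← ENNReal.ofReal_toReal hFfin, ← hadef, ← hbdef,
      ← ENNReal.ofReal_mul (by positivity), ← ENNReal.ofReal_mul (by positivity),
      ← ENNReal.ofReal_mul (by positivity), ← ENNReal.ofReal_mul (by positivity)]
      at happ
    have hreal : (l ^ (2*n) : ℝ)⁻¹ * (((l ^ (2*n+2) : ℝ))⁻¹ ^ q⁻¹ * a)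
        ≤ c * (((l ^ (2*n+2) : ℝ))⁻¹ ^ p⁻¹ * b) :=
      (ENNReal.ofReal_le_ofReal_iff (by positivity)).1 happ
    have hA1 : ((l ^ (2*n) : ℝ))⁻¹ = l ^ (-(2*(n:ℝ))) := by
      rw [← Real.rpow_natCast l (2*n), ← Real.rpow_neg hl.le]
      congr 1
      push_cast; ring
    have hA2 : (((l ^ (2*n+2) : ℝ))⁻¹ : ℝ) ^ (q⁻¹) = l ^ ((-(2*(n:ℝ)+2)) * q⁻¹) := by
      rw [← Real.rpow_natCast l (2*n+2), ← Real.rpow_neg hl.le, ← Real.rpow_mul hl.le]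
      congr 1
      push_cast; ring
    have hA3 : (((l ^ (2*n+2) : ℝ))⁻¹ : ℝ) ^ (p⁻¹) = l ^ ((-(2*(n:ℝ)+2)) * p⁻¹) := by
      rw [← Real.rpow_natCast l (2*n+2), ← Real.rpow_neg hl.le, ← Real.rpow_mul hl.le]
      congr 1
      push_cast; ring
    rw [hA1, hA2, hA3] at hreal
    calc l ^ (-(2*(n:ℝ)) + (-(2*(n:ℝ)+2)) * q⁻¹) * a
        = l ^ (-(2*(n:ℝ))) * (l ^ ((-(2*(n:ℝ)+2)) * q⁻¹) * a) := by
          rw [Real.rpow_add hl]; ring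
      _ ≤ c * (l ^ ((-(2*(n:ℝ)+2)) * p⁻¹) * b) := hreal
  have halg := exponent_eq ha hc hb hmain
  have hq0' : q ≠ 0 := hq0.ne'
  have hp0' : p ≠ 0 := hp0.ne'
  have h22 : (2*(n:ℝ)+2) ≠ 0 := by positivity
  field_simp at halg ⊢
  nlinarith [halg]

end
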